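/- arXiv:1704.04564 — 2 statements merged into one kernel-verified Lean document; each statement's English description precedes it below -/
import Mathlib

section
/- Let A, B be nonempty Borel subsets of Polish spaces and c : A × B → ℝ a Borel function with c(·,b) bounded below for each b ∈ B and c(a,·) bounded above for each a ∈ A. Suppose Assumption (Ma) holds: there exist γ_A ∈ (0,1), L_A > 0, b₀ ∈ B with −L_A + γ_A·ĉ♯(a) ≤ c⁺(a,b₀) for all a ∈ A. Then for all Borel probability measures π^A on A and π^B on B: γ_A · ∫_A ∫_B c⁺(a,b) π^B(db) π^A(da) ≤ ĉ♯(π^A) + L_A − min{0, ĉ♭(b₀)}, where ĉ♯(π^A) := sup_{b∈B} ∫_A c(a,b) π^A(da) and ĉ♭(b₀) := inf_{a∈A} c(a,b₀). In particular, if ĉ♯(π^A) < +∞, then ∫∫ c⁺ dπ^B dπ^A < +∞ for every π^B, so π^A is a safe strategy. -/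
open MeasureTheory Classical
open scoped ENNReal

/-- Extended integral of `c(·,b)`, equal to `+∞` when not integrable. -/
noncomputable def extIntegral {A : Type*} [MeasurableSpace A]
    (c : A → ℝ) (π : Measure A) : EReal :=
  if Integrable c π then ((∫ a, c a ∂π : ℝ) : EReal) else ⊤

/-- Corollary 3.9: under Assumption (Ma),
`γ_A ∫∫ c⁺ dπ^B dπ^A ≤ ĉ♯(π^A) + L_A − min{0, ĉ♭(b₀)}` for all probability
measures `π^A`, `π^B`; in particular if `ĉ♯(π^A) < +∞` then `π^A` is safe. -/
theorem Ma_safe_strategies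
    {A B : Type*} [MeasurableSpace A] [MeasurableSpace B]
    [TopologicalSpace A] [PolishSpace A] [BorelSpace A]
    [TopologicalSpace B] [PolishSpace B] [BorelSpace B]
    [Nonempty A] [Nonempty B]
    (c : A → B → ℝ) (hc : Measurable (Function.uncurry c))
    (hlb : ∀ b : B, ∃ m : ℝ, ∀ a : A, m ≤ c a b)
    (hub : ∀ a : A, ∃ M : ℝ, ∀ b : B, c a b ≤ M)
    (γA LA : ℝ) (hγ0 : 0 < γA) (hγ1 : γA < 1) (hLA : 0 < LA) (b₀ : B)
    (hMa : ∀ a : A, -LA + γA * (⨆ b : B, c a b) ≤ max (c a b₀) 0) :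
    (∀ (πA : Measure A) (πB : Measure B),
        IsProbabilityMeasure πA → IsProbabilityMeasure πB →
        ((γA : ℝ) : EReal) *
            ((∫⁻ a, ∫⁻ b, ENNReal.ofReal (max (c a b) 0) ∂πB ∂πA : ℝ≥0∞) : EReal) ≤
          (⨆ b : B, extIntegral (fun a => c a b) πA) + ((LA : ℝ) : EReal)
            - min 0 ((⨅ a : A, c a b₀ : ℝ) : EReal)) ∧
    (∀ πA : Measure A, IsProbabilityMeasure πA →
        (⨆ b : B, extIntegral (fun a => c a b) πA) < ⊤ →
        ∀ πB : Measure B, IsProbabilityMeasure πB →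
          (∫⁻ a, ∫⁻ b, ENNReal.ofReal (max (c a b) 0) ∂πB ∂πA) < ⊤) := by
  have mcb₀ : Measurable fun a => c a b₀ := hc.comp measurable_prodMk_right
  set m : ℝ := min 0 (⨅ a : A, c a b₀) with hm
  have hbdd : BddBelow (Set.range fun a : A => c a b₀) := by
    obtain ⟨mb, hmb⟩ := hlb b₀
    exact ⟨mb, by rintro x ⟨a, rfl⟩; exact hmb a⟩
  have hm_le : ∀ a : A, m ≤ min (c a b₀) 0 := by
    intro a
    refine le_min (le_trans (min_le_right _ _) (ciInf_le hbdd a)) (min_le_left _ _)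
  -- real pointwise inequality from (Ma)
  have step2 : ∀ a : A, γA * max (⨆ b : B, c a b) 0 ≤ LA + max (c a b₀) 0 := by
    intro a
    rcases le_total (⨆ b : B, c a b) 0 with h | h
    · rw [max_eq_right h, mul_zero]
      have := le_max_right (c a b₀) 0
      linarith
    · rw [max_eq_left h]
      have := hMa a
      linarith
  -- key lintegral estimate
  have key : ∀ (πA : Measure A) (πB : Measure B),
      IsProbabilityMeasure πA → IsProbabilityMeasure πB →
      ENNReal.ofReal γA * (∫⁻ a, ∫⁻ b, ENNReal.ofReal (max (c a b) 0) ∂πB ∂πA)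
        ≤ ENNReal.ofReal LA + ∫⁻ a, ENNReal.ofReal (max (c a b₀) 0) ∂πA := by
    intro πA πB hA hB
    have step1 : ∀ a : A, ∫⁻ b, ENNReal.ofReal (max (c a b) 0) ∂πB
        ≤ ENNReal.ofReal (max (⨆ b : B, c a b) 0) := by
      intro a
      obtain ⟨M, hM⟩ := hub a
      have hba : BddAbove (Set.range fun b : B => c a b) :=
        ⟨M, by rintro x ⟨b, rfl⟩; exact hM b⟩
      calc ∫⁻ b, ENNReal.ofReal (max (c a b) 0) ∂πB
          ≤ ∫⁻ _b, ENNReal.ofReal (max (⨆ b : B, c a b) 0) ∂πB :=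
            lintegral_mono fun b =>
              ENNReal.ofReal_le_ofReal (max_le_max (le_ciSup hba b) le_rfl)
        _ = ENNReal.ofReal (max (⨆ b : B, c a b) 0) := by
            rw [lintegral_const, hB.measure_univ, mul_one]
    calc ENNReal.ofReal γA * (∫⁻ a, ∫⁻ b, ENNReal.ofReal (max (c a b) 0) ∂πB ∂πA)
        ≤ ENNReal.ofReal γA * ∫⁻ a, ENNReal.ofReal (max (⨆ b : B, c a b) 0) ∂πA :=
          mul_le_mul_right (lintegral_mono step1) _
      _ = ∫⁻ a, ENNReal.ofReal γA * ENNReal.ofReal (max (⨆ b : B, c a b) 0) ∂πA :=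
          (lintegral_const_mul' _ _ ENNReal.ofReal_ne_top).symm
      _ = ∫⁻ a, ENNReal.ofReal (γA * max (⨆ b : B, c a b) 0) ∂πA := by
          simp_rw [← ENNReal.ofReal_mul hγ0.le]
      _ ≤ ∫⁻ a, (ENNReal.ofReal LA + ENNReal.ofReal (max (c a b₀) 0)) ∂πA :=
          lintegral_mono fun a => by
            rw [← ENNReal.ofReal_add hLA.le (le_max_right _ _)]
            exact ENNReal.ofReal_le_ofReal (step2 a)
      _ = ENNReal.ofReal LA + ∫⁻ a, ENNReal.ofReal (max (c a b₀) 0) ∂πA := by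
          rw [lintegral_add_left measurable_const, lintegral_const, hA.measure_univ, mul_one]
  have hγne : ENNReal.ofReal γA ≠ 0 := by
    simp only [ne_eq, ENNReal.ofReal_eq_zero, not_le]
    exact hγ0
  have hmin_coe : min 0 ((⨅ a : A, c a b₀ : ℝ) : EReal) = ((m : ℝ) : EReal) := by
    rw [hm]
    rcases le_total (0 : ℝ) (⨅ a : A, c a b₀) with h | h
    · rw [min_eq_left h, min_eq_left (by exact_mod_cast h)]
      simp
    · rw [min_eq_right h, min_eq_right (by exact_mod_cast h)]
  constructor
  · intro πA πB hA hB
    by_cases hint : Integrable (fun a => c a b₀) πA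
    · -- integrable case
      have hpos : Integrable (fun a => max (c a b₀) 0) πA := hint.pos_part
      have hJ : (∫⁻ a, ENNReal.ofReal (max (c a b₀) 0) ∂πA)
          = ENNReal.ofReal (∫ a, max (c a b₀) 0 ∂πA) :=
        (ofReal_integral_eq_lintegral_ofReal hpos
          (Filter.Eventually.of_forall fun a => le_max_right _ _)).symm
      set I : ℝ≥0∞ := ∫⁻ a, ∫⁻ b, ENNReal.ofReal (max (c a b) 0) ∂πB ∂πA with hIdef
      have hkey := key πA πB hA hB
      have hRne : ENNReal.ofReal LA + (∫⁻ a, ENNReal.ofReal (max (c a b₀) 0) ∂πA) ≠ ⊤ := by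
        rw [hJ]
        exact ENNReal.add_ne_top.2 ⟨ENNReal.ofReal_ne_top, ENNReal.ofReal_ne_top⟩
      have hIne : I ≠ ⊤ := by
        intro h
        apply hRne
        refine top_le_iff.1 ?_
        have h2 : ENNReal.ofReal γA * I = ⊤ := by
          rw [h, ENNReal.mul_top hγne]
        rw [← h2]
        exact hkey
      set Ir : ℝ := I.toReal with hIr
      have hJnn : (0 : ℝ) ≤ ∫ a, max (c a b₀) 0 ∂πA :=
        integral_nonneg fun a => le_max_right _ _
      have hreal : γA * Ir ≤ LA + ∫ a, max (c a b₀) 0 ∂πA := by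
        have h1 := hkey
        rw [← hIdef, hJ, ← ENNReal.ofReal_toReal hIne, ← ENNReal.ofReal_mul hγ0.le,
          ← ENNReal.ofReal_add hLA.le hJnn] at h1
        exact (ENNReal.ofReal_le_ofReal_iff (by linarith)).1 h1
      have hptw : ∀ a : A, max (c a b₀) 0 ≤ c a b₀ - m := by
        intro a
        have h := hm_le a
        rcases le_total (c a b₀) 0 with h' | h'
        · rw [max_eq_right h']
          have : m ≤ c a b₀ := le_trans h (min_le_left _ _)
          linarith
        · rw [max_eq_left h']
          have : m ≤ 0 := le_trans h (min_le_right _ _)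
          linarith
      have hJle : (∫ a, max (c a b₀) 0 ∂πA) ≤ (∫ a, c a b₀ ∂πA) - m := by
        have h1 : (∫ a, max (c a b₀) 0 ∂πA) ≤ ∫ a, (c a b₀ - m) ∂πA :=
          integral_mono hpos (hint.sub (integrable_const m)) hptw
        rwa [integral_sub hint (integrable_const m), integral_const, probReal_univ,
          one_smul] at h1
      have hT : ((∫ a, c a b₀ ∂πA : ℝ) : EReal) ≤ ⨆ b : B, extIntegral (fun a => c a b) πA :=
        le_iSup_of_le b₀ (le_of_eq (by rw [extIntegral, if_pos hint]))
      have hIcoe : ((I : ℝ≥0∞) : EReal) = ((Ir : ℝ) : EReal) := by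
        rw [← ENNReal.ofReal_toReal hIne, EReal.coe_ennreal_ofReal,
          max_eq_left ENNReal.toReal_nonneg]
      rw [hmin_coe, hIcoe, ← EReal.coe_mul, sub_eq_add_neg, ← EReal.coe_neg]
      calc ((γA * Ir : ℝ) : EReal)
          ≤ (((∫ a, c a b₀ ∂πA) + LA + (-m) : ℝ) : EReal) := by
            apply EReal.coe_le_coe_iff.2
            linarith
        _ = ((∫ a, c a b₀ ∂πA : ℝ) : EReal) + ((LA : ℝ) : EReal) + ((-m : ℝ) : EReal) := by
            rw [EReal.coe_add, EReal.coe_add]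
        _ ≤ (⨆ b : B, extIntegral (fun a => c a b) πA) + ((LA : ℝ) : EReal)
              + ((-m : ℝ) : EReal) :=
            add_le_add_left (add_le_add_left hT _) _
    · -- non-integrable case: RHS is ⊤
      have htop : (⨆ b : B, extIntegral (fun a => c a b) πA) = ⊤ :=
        top_unique (le_iSup_of_le b₀ (le_of_eq (by rw [extIntegral, if_neg hint])))
      rw [htop, hmin_coe, sub_eq_add_neg, ← EReal.coe_neg]
      rw [EReal.top_add_coe, EReal.top_add_coe]
      exact le_top
  · intro πA hA hTlt πB hB
    have hint : Integrable (fun a => c a b₀) πA := by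
      by_contra h
      have htop : (⨆ b : B, extIntegral (fun a => c a b) πA) = ⊤ :=
        top_unique (le_iSup_of_le b₀ (le_of_eq (by rw [extIntegral, if_neg h])))
      exact absurd htop hTlt.ne
    have hpos : Integrable (fun a => max (c a b₀) 0) πA := hint.pos_part
    have hJ : (∫⁻ a, ENNReal.ofReal (max (c a b₀) 0) ∂πA)
        = ENNReal.ofReal (∫ a, max (c a b₀) 0 ∂πA) :=
      (ofReal_integral_eq_lintegral_ofReal hpos
        (Filter.Eventually.of_forall fun a => le_max_right _ _)).symm
    have hkey := key πA πB hA hB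
    by_contra h
    rw [not_lt, top_le_iff] at h
    rw [h, ENNReal.mul_top hγne, top_le_iff, hJ] at hkey
    exact ENNReal.add_ne_top.2 ⟨ENNReal.ofReal_ne_top, ENNReal.ofReal_ne_top⟩ hkey
end

section
/- Let X and Y be metric spaces, Φ : X → 2^Y a set-valued mapping with nonempty domain, and f : Gr(Φ) → ℝ∪{±∞}. If f is lower semi-continuous on Gr(Φ) and Φ is upper semi-continuous and compact-valued at each point of its domain, then f is K-inf-compact on Gr(Φ): for every compact set C ⊆ Dom Φ, the restriction of f to Gr_C(Φ) := {(x,y) : x ∈ C, y ∈ Φ(x)} has compact sublevel sets {(x,y) ∈ Gr_C(Φ) : f(x,y) ≤ λ} for every λ ∈ ℝ. -/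
/-- Lemma A.6(b): if `f` is lower semi-continuous on `Gr(Φ)` and `Φ` is upper
semi-continuous and compact-valued at each point of its domain, then `f` is
K-inf-compact on `Gr(Φ)`. -/
theorem K_inf_compact_of_usc_compact_valued
    {X Y : Type*} [MetricSpace X] [MetricSpace Y]
    (Φ : X → Set Y) (hdom : {x : X | (Φ x).Nonempty}.Nonempty)
    (f : X × Y → EReal)
    (hf : LowerSemicontinuousOn f {p : X × Y | p.2 ∈ Φ p.1})
    (husc : ∀ x ∈ {x : X | (Φ x).Nonempty}, ∀ G : Set Y, IsOpen G → Φ x ⊆ G →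
        ∃ U ∈ nhds x, ∀ x' ∈ U ∩ {x : X | (Φ x).Nonempty}, Φ x' ⊆ G)
    (hcv : ∀ x ∈ {x : X | (Φ x).Nonempty}, IsCompact (Φ x)) :
    ∀ C : Set X, C.Nonempty → IsCompact C → C ⊆ {x : X | (Φ x).Nonempty} →
      ∀ lam : ℝ,
        IsCompact {p : X × Y | p.1 ∈ C ∧ p.2 ∈ Φ p.1 ∧ f p ≤ (lam : EReal)} := by
  intro C hCne hC hCdom lam
  apply IsSeqCompact.isCompact
  intro u hu
  -- x-components in C, extract convergent subsequence
  obtain ⟨x, hxC, φ, hφ, hxlim⟩ := hC.isSeqCompact (fun n => (hu n).1)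
  have hxdom : (Φ x).Nonempty := hCdom hxC
  have hΦx : IsCompact (Φ x) := hcv x hxdom
  -- the distances of y-components to Φ x tend to 0
  have hd : Filter.Tendsto (fun n => Metric.infDist (u (φ n)).2 (Φ x)) Filter.atTop (nhds 0) := by
    rw [Metric.tendsto_atTop]
    intro ε hε
    obtain ⟨U, hU, hUsub⟩ := husc x hxdom (Metric.thickening ε (Φ x))
      Metric.isOpen_thickening (Metric.self_subset_thickening hε _)
    have := hxlim.eventually_mem hU
    rw [Filter.eventually_atTop] at this
    obtain ⟨N, hN⟩ := this
    refine ⟨N, fun n hn => ?_⟩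
    have hy : (u (φ n)).2 ∈ Metric.thickening ε (Φ x) :=
      hUsub _ ⟨hN n hn, hCdom (hu (φ n)).1⟩ (hu (φ n)).2.1
    rw [Metric.mem_thickening_iff] at hy
    obtain ⟨z, hz, hdz⟩ := hy
    have h0 : (0:ℝ) ≤ Metric.infDist (u (φ n)).2 (Φ x) := Metric.infDist_nonneg
    have h1 : Metric.infDist (u (φ n)).2 (Φ x) ≤ dist (u (φ n)).2 z :=
      Metric.infDist_le_dist_of_mem hz
    rw [Real.dist_eq, sub_zero, abs_of_nonneg h0]
    exact lt_of_le_of_lt h1 hdz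
  -- choose nearest points z n ∈ Φ x
  have hz : ∀ n, ∃ z ∈ Φ x, Metric.infDist (u (φ n)).2 (Φ x) = dist (u (φ n)).2 z :=
    fun n => hΦx.exists_infDist_eq_dist hxdom _
  choose z hzmem hzdist using hz
  obtain ⟨y, hyΦ, ψ, hψ, hzlim⟩ := hΦx.isSeqCompact hzmem
  -- y-components converge along φ ∘ ψ
  have hylim : Filter.Tendsto (fun k => (u (φ (ψ k))).2) Filter.atTop (nhds y) := by
    rw [tendsto_iff_dist_tendsto_zero]
    apply squeeze_zero (fun k => dist_nonneg)
      (g := fun k => Metric.infDist (u (φ (ψ k))).2 (Φ x) + dist (z (ψ k)) y)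
    · intro k
      calc dist (u (φ (ψ k))).2 y ≤ dist (u (φ (ψ k))).2 (z (ψ k)) + dist (z (ψ k)) y :=
            dist_triangle _ _ _
        _ = Metric.infDist (u (φ (ψ k))).2 (Φ x) + dist (z (ψ k)) y := by rw [hzdist]
    · have h1 := hd.comp hψ.tendsto_atTop
      have h2 := (tendsto_iff_dist_tendsto_zero.mp hzlim)
      simpa using h1.add h2
  have hxlim' : Filter.Tendsto (fun k => (u (φ (ψ k))).1) Filter.atTop (nhds x) :=
    hxlim.comp hψ.tendsto_atTop
  have hplim : Filter.Tendsto (fun k => u (φ (ψ k))) Filter.atTop (nhds (x, y)) := by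
    rw [nhds_prod_eq]
    exact hxlim'.prodMk hylim
  -- limit is in sublevel set
  have hfp : f (x, y) ≤ (lam : EReal) := by
    by_contra h
    push_neg at h
    have hev := hf (x, y) hyΦ (lam : EReal) h
    have : Filter.Tendsto (fun k => u (φ (ψ k))) Filter.atTop
        (nhdsWithin (x, y) {p : X × Y | p.2 ∈ Φ p.1}) :=
      tendsto_nhdsWithin_of_tendsto_nhds_of_eventually_within _ hplim
        (Filter.Eventually.of_forall fun k => (hu (φ (ψ k))).2.1)
    have := (this.eventually hev).exists
    obtain ⟨k, hk⟩ := this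
    exact absurd ((hu (φ (ψ k))).2.2) (not_le.mpr hk)
  exact ⟨(x, y), ⟨hxC, hyΦ, hfp⟩, φ ∘ ψ, hφ.comp hψ,
    by simpa [Function.comp_def] using hplim⟩
end
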